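/- For every p with 1 ≤ p < 2 there are constants c_0, c_1 > 0 such that for all integers n, M, N with 1 ≤ n ≤ c_0·min(M,N), every randomized algorithm using n function values for computing the mean S_N on B_∞^N(L_p^M) (with outputs in L_p^M, error measured in the L_p^M norm) has worst-case expected error at least c_1 · n^{−1+1/p}. -/

import Mathlib

noncomputable def lpNorm (p : ℝ) (M : ℕ) (x : Fin M → ℝ) : ℝ :=
  ((M : ℝ)⁻¹ * ∑ i, |x i| ^ p) ^ (1 / p)

lemma lpNorm_nonneg (p : ℝ) (M : ℕ) (x : Fin M → ℝ) : 0 ≤ lpNorm p M x := by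
  apply Real.rpow_nonneg
  have : ∀ i ∈ Finset.univ, (0:ℝ) ≤ |x i| ^ p := fun i _ => Real.rpow_nonneg (abs_nonneg _) _
  positivity

lemma lpNorm_rescale (p : ℝ) (hp0 : 0 < p) (M : ℕ) (z : Fin M → ℝ) :
    lpNorm p M z = (∑ i, |(M:ℝ)⁻¹ ^ (1/p) * z i| ^ p) ^ (1/p) := by
  have hM : (0:ℝ) ≤ (M:ℝ)⁻¹ := by positivity
  unfold lpNorm
  congr 1
  rw [Finset.mul_sum]
  refine Finset.sum_congr rfl fun i _ => ?_
  rw [abs_mul, Real.mul_rpow (abs_nonneg _) (abs_nonneg _),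
      abs_of_nonneg (Real.rpow_nonneg hM _), ← Real.rpow_mul hM,
      one_div, inv_mul_cancel₀ (ne_of_gt hp0), Real.rpow_one]

lemma lpNorm_triangle (p : ℝ) (hp : 1 ≤ p) (M : ℕ) (x y : Fin M → ℝ) :
    lpNorm p M (x + y) ≤ lpNorm p M x + lpNorm p M y := by
  have hp0 : 0 < p := lt_of_lt_of_le one_pos hp
  rw [lpNorm_rescale p hp0 M, lpNorm_rescale p hp0 M, lpNorm_rescale p hp0 M]
  have := Real.Lp_add_le Finset.univ (fun i => (M:ℝ)⁻¹ ^ (1/p) * x i)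
    (fun i => (M:ℝ)⁻¹ ^ (1/p) * y i) hp
  simpa [Pi.add_apply, mul_add] using this

lemma lpNorm_sub_le (p : ℝ) (hp : 1 ≤ p) (M : ℕ) (x y z : Fin M → ℝ) :
    lpNorm p M (x - z) ≤ lpNorm p M (x - y) + lpNorm p M (y - z) := by
  have h : x - z = (x - y) + (y - z) := by abel
  rw [h]; exact lpNorm_triangle p hp M _ _

lemma lpNorm_sub_comm (p : ℝ) (M : ℕ) (x y : Fin M → ℝ) :
    lpNorm p M (x - y) = lpNorm p M (y - x) := by
  unfold lpNorm
  congr 2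
  refine Finset.sum_congr rfl fun i _ => ?_
  rw [Pi.sub_apply, Pi.sub_apply, abs_sub_comm]

lemma lpNorm_ge (p : ℝ) (hp0 : 0 < p) (M : ℕ) (x : Fin M → ℝ) (S : Finset (Fin M)) :
    ((M:ℝ)⁻¹ * ∑ i ∈ S, |x i| ^ p) ^ (1/p) ≤ lpNorm p M x := by
  apply Real.rpow_le_rpow
  · exact mul_nonneg (by positivity)
      (Finset.sum_nonneg fun i _ => Real.rpow_nonneg (abs_nonneg _) _)
  · refine mul_le_mul_of_nonneg_left ?_ (by positivity)
    exact Finset.sum_le_sum_of_subset_of_nonneg (Finset.subset_univ S)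
      (fun i _ _ => Real.rpow_nonneg (abs_nonneg _) _)
  · positivity

theorem mean_lp_lower_low_sharp (p : ℝ) (hp1 : 1 ≤ p) (hp2 : p < 2) :
    ∃ c₀ c₁ : ℝ, 0 < c₀ ∧ 0 < c₁ ∧
      ∀ (n M N : ℕ), 1 ≤ n → (n : ℝ) ≤ c₀ * min (M : ℝ) (N : ℝ) →
        ∀ (Ω : Type) [Fintype Ω] (P : Ω → ℝ),
          (∀ ω, 0 ≤ P ω) → (∑ ω, P ω = 1) →
          ∀ (t : Ω → Fin n → Fin N)
            (φ : Ω → (Fin n → (Fin M → ℝ)) → (Fin M → ℝ)) (b : ℝ),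
            (∀ f : Fin N → Fin M → ℝ, (∀ j, lpNorm p M (f j) ≤ 1) →
              ∑ ω, P ω *
                  lpNorm p M
                    ((N : ℝ)⁻¹ • ∑ j, f j - φ ω (fun l => f (t ω l))) ≤ b) →
            c₁ * (n : ℝ) ^ (-1 + 1 / p) ≤ b := by
  have hp0 : 0 < p := lt_of_lt_of_le one_pos hp1
  refine ⟨1/2, 1/4, one_half_pos, by norm_num, ?_⟩
  intro n M N hn hnMN Ω _ P hP hPsum t φ b hb
  set K := 2 * n with hKdef
  have hK0 : 0 < K := by omega
  -- K ≤ M and K ≤ N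
  have hKM : K ≤ M := by
    have h1 : (K:ℝ) ≤ (M:ℝ) := by
      have : (n:ℝ) ≤ 1/2 * (M:ℝ) := le_trans hnMN (by
        have := min_le_left (M:ℝ) (N:ℝ)
        nlinarith)
      push_cast [hKdef]; linarith
    exact_mod_cast h1
  have hKN : K ≤ N := by
    have h1 : (K:ℝ) ≤ (N:ℝ) := by
      have : (n:ℝ) ≤ 1/2 * (N:ℝ) := le_trans hnMN (by
        have := min_le_right (M:ℝ) (N:ℝ)
        nlinarith)
      push_cast [hKdef]; linarith
    exact_mod_cast h1
  have hM0 : (0:ℝ) < (M:ℝ) := by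
    have : 0 < M := lt_of_lt_of_le hK0 hKM
    exact_mod_cast this
  have hN0 : (0:ℝ) < (N:ℝ) := by
    have : 0 < N := lt_of_lt_of_le hK0 hKN
    exact_mod_cast this
  -- the construction
  let r : Fin N → Fin K := fun j => ⟨j % K, Nat.mod_lt _ hK0⟩
  let σ : Fin K → Fin M := Fin.castLE hKM
  have hσinj : Function.Injective σ := Fin.castLE_injective hKM
  set Mp : ℝ := (M:ℝ) ^ (1/p) with hMpdef
  have hMp0 : 0 ≤ Mp := Real.rpow_nonneg (le_of_lt hM0) _
  have hMpp : Mp ^ p = (M:ℝ) := by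
    rw [hMpdef, ← Real.rpow_mul (le_of_lt hM0), one_div,
      inv_mul_cancel₀ (ne_of_gt hp0), Real.rpow_one]
  let ε : Bool → ℝ := fun c => if c then (1:ℝ) else -1
  have habsε : ∀ c, |ε c| = 1 := by intro c; cases c <;> simp [ε]
  let f : (Fin K → Bool) → Fin N → Fin M → ℝ :=
    fun s j i => ε (s (r j)) * (if i = σ (r j) then Mp else 0)
  -- each f s j is in the unit ball
  have hnorm : ∀ s j, lpNorm p M (f s j) ≤ 1 := by
    intro s j
    have hsum : ∑ i, |f s j i| ^ p = (M:ℝ) := by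
      rw [Finset.sum_eq_single (σ (r j))]
      · show |ε (s (r j)) * if σ (r j) = σ (r j) then Mp else 0| ^ p = (M:ℝ)
        rw [if_pos rfl, abs_mul, habsε, one_mul, abs_of_nonneg hMp0, hMpp]
      · intro i _ hi
        simp only [f, if_neg hi, mul_zero, abs_zero]
        exact Real.zero_rpow (ne_of_gt hp0)
      · intro h; exact absurd (Finset.mem_univ _) h
    unfold lpNorm
    rw [hsum, inv_mul_cancel₀ (ne_of_gt hM0), Real.one_rpow]
  -- error of the algorithm on input f s
  let err : (Fin K → Bool) → Ω → ℝ := fun s ω =>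
    lpNorm p M ((N : ℝ)⁻¹ • ∑ j, f s j - φ ω (fun l => f s (t ω l)))
  have herr0 : ∀ s ω, 0 ≤ err s ω := fun s ω => lpNorm_nonneg _ _ _
  have hberr : ∀ s, ∑ ω, P ω * err s ω ≤ b := fun s => hb (f s) (hnorm s)
  -- observed coordinates
  let T : Ω → Finset (Fin K) := fun ω => Finset.image (fun l => r (t ω l)) Finset.univ
  have hTcard : ∀ ω, (T ω).card ≤ n := fun ω =>
    le_trans (Finset.card_image_le) (by simp)
  let flip : Ω → (Fin K → Bool) → (Fin K → Bool) :=
    fun ω s q => if q ∈ T ω then s q else !s q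
  have hflipinv : ∀ ω, Function.Involutive (flip ω) := by
    intro ω s
    funext q
    by_cases h : q ∈ T ω <;> simp [flip, h]
  -- the lower bound L
  set L : ℝ := (1/2) * (n:ℝ) ^ (-1 + 1/p) with hLdef
  have hn0 : (0:ℝ) < (n:ℝ) := by exact_mod_cast hn
  have hL0 : 0 ≤ L := by
    rw [hLdef]; positivity
  -- key difference bound
  have hdiff : ∀ ω s, L ≤ lpNorm p M
      (((N : ℝ)⁻¹ • ∑ j, f s j) - ((N : ℝ)⁻¹ • ∑ j, f (flip ω s) j)) := by
    intro ω s
    have hMp0' : (0:ℝ) < Mp := Real.rpow_pos_of_pos hM0 _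
    have hK0' : (0:ℝ) < (K:ℝ) := by exact_mod_cast hK0
    set s' : Fin K → Bool := flip ω s with hs'def
    set D : Fin M → ℝ := ((N : ℝ)⁻¹ • ∑ j, f s j) - ((N : ℝ)⁻¹ • ∑ j, f s' j) with hDdef
    -- counting fibers of r
    have hcount : ∀ r₀ : Fin K, N / K ≤ (Finset.univ.filter (fun j : Fin N => r j = r₀)).card := by
      intro r₀
      have hlt : ∀ m, m < N / K → r₀.val + m * K < N := by
        intro m hm
        have h1 : (m+1) * K ≤ (N/K) * K := Nat.mul_le_mul_right K (by omega)
        have h2 : (N/K) * K ≤ N := Nat.div_mul_le_self N K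
        have h3 : r₀.val < K := r₀.isLt
        calc r₀.val + m * K < K + m * K := by omega
          _ = (m+1) * K := by ring
          _ ≤ N := le_trans h1 h2
      have hNpos : 0 < N := lt_of_lt_of_le hK0 hKN
      have key : (Finset.range (N/K)).card
          ≤ (Finset.univ.filter (fun j : Fin N => r j = r₀)).card := by
        apply Finset.card_le_card_of_injOn
          (fun m : ℕ => (⟨(r₀.val + m * K) % N, Nat.mod_lt _ hNpos⟩ : Fin N))
        · intro m hm
          rw [Finset.mem_coe, Finset.mem_range] at hm
          refine Finset.mem_filter.mpr ⟨Finset.mem_univ _, ?_⟩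
          apply Fin.ext
          show ((r₀.val + m * K) % N) % K = r₀.val
          rw [Nat.mod_eq_of_lt (hlt m hm), Nat.add_mul_mod_self_right,
            Nat.mod_eq_of_lt r₀.isLt]
        · intro m1 hm1 m2 hm2 h
          rw [Finset.mem_coe, Finset.mem_range] at hm1 hm2
          have hv : (r₀.val + m1 * K) % N = (r₀.val + m2 * K) % N := congrArg Fin.val h
          rw [Nat.mod_eq_of_lt (hlt m1 hm1), Nat.mod_eq_of_lt (hlt m2 hm2)] at hv
          have : m1 * K = m2 * K := by omega
          exact Nat.eq_of_mul_eq_mul_right hK0 this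
      simpa using key
    have hc2 : ∀ r₀ : Fin K,
        (N:ℝ) ≤ 2 * (K:ℝ) * ((Finset.univ.filter (fun j : Fin N => r j = r₀)).card : ℝ) := by
      intro r₀
      set c := (Finset.univ.filter (fun j : Fin N => r j = r₀)).card with hc
      have hq1 : 1 ≤ N / K := (Nat.one_le_div_iff hK0).mpr hKN
      have hK0' : (0:ℝ) < (K:ℝ) := by exact_mod_cast hK0
      have h1 : (N:ℝ) < ((N/K : ℕ):ℝ) * (K:ℝ) + (K:ℝ) := by
        exact_mod_cast Nat.lt_div_mul_add hK0
      have h2 : ((N/K : ℕ):ℝ) ≤ (c:ℝ) := by exact_mod_cast hcount r₀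
      have h3 : (1:ℝ) ≤ ((N/K : ℕ):ℝ) := by exact_mod_cast hq1
      have h4 : ((N/K : ℕ):ℝ) * (K:ℝ) ≤ (c:ℝ) * (K:ℝ) :=
        mul_le_mul_of_nonneg_right h2 hK0'.le
      have h5 : (K:ℝ) ≤ ((N/K : ℕ):ℝ) * (K:ℝ) := le_mul_of_one_le_left hK0'.le h3
      nlinarith
    -- value of D on unobserved coordinates
    have hDval : ∀ r₀ : Fin K, r₀ ∉ T ω →
        (K:ℝ)⁻¹ * Mp ≤ |D (σ r₀)| := by
      intro r₀ hr₀
      set c := (Finset.univ.filter (fun j : Fin N => r j = r₀)).card with hc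
      have hDco : D (σ r₀) = (N:ℝ)⁻¹ * ((c:ℝ) * (2 * ε (s r₀) * Mp)) := by
        have h0 : D (σ r₀) = (N:ℝ)⁻¹ * ∑ j, (f s j (σ r₀) - f s' j (σ r₀)) := by
          rw [hDdef]
          simp only [Pi.sub_apply, Pi.smul_apply, Finset.sum_apply, smul_eq_mul,
            Finset.sum_sub_distrib, mul_sub]
        have h1 : ∀ j, f s j (σ r₀) - f s' j (σ r₀)
            = if r j = r₀ then 2 * ε (s r₀) * Mp else 0 := by
          intro j
          by_cases h : r j = r₀
          · rw [if_pos h]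
            have hcond : σ r₀ = σ (r j) := by rw [h]
            have hflipval : s' (r j) = !(s (r j)) := by
              rw [hs'def]
              show (if r j ∈ T ω then s (r j) else !s (r j)) = !(s (r j))
              rw [if_neg (h ▸ hr₀)]
            show ε (s (r j)) * (if σ r₀ = σ (r j) then Mp else 0)
                - ε (s' (r j)) * (if σ r₀ = σ (r j) then Mp else 0)
                = 2 * ε (s r₀) * Mp
            rw [if_pos hcond, hflipval, h]
            cases s r₀ <;> simp [ε] <;> ring
          · rw [if_neg h]
            have hcond : ¬ (σ r₀ = σ (r j)) := fun hc' => h (hσinj hc'.symm)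
            show ε (s (r j)) * (if σ r₀ = σ (r j) then Mp else 0)
                - ε (s' (r j)) * (if σ r₀ = σ (r j) then Mp else 0) = 0
            rw [if_neg hcond]
            ring
        rw [h0]
        congr 1
        rw [Finset.sum_congr rfl (fun j _ => h1 j), ← Finset.sum_filter,
          Finset.sum_const, nsmul_eq_mul]
      have hDco2 : D (σ r₀) = ε (s r₀) * ((N:ℝ)⁻¹ * ((c:ℝ) * (2 * Mp))) := by
        rw [hDco]; ring
      have hnn : (0:ℝ) ≤ (N:ℝ)⁻¹ * ((c:ℝ) * (2 * Mp)) :=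
        mul_nonneg (inv_nonneg.mpr hN0.le)
          (mul_nonneg (Nat.cast_nonneg c) (mul_nonneg (by norm_num) hMp0'.le))
      have habsD : |D (σ r₀)| = (N:ℝ)⁻¹ * ((c:ℝ) * (2 * Mp)) := by
        rw [hDco2, abs_mul, habsε, one_mul, abs_of_nonneg hnn]
      rw [habsD]
      have h := hc2 r₀
      rw [← hc] at h
      rw [inv_mul_eq_div, inv_mul_eq_div, div_le_div_iff₀ hK0' hN0]
      nlinarith [mul_le_mul_of_nonneg_left h hMp0'.le]
    -- sum lower bound over unobserved coordinates
    have hTccard : n ≤ ((T ω)ᶜ : Finset (Fin K)).card := by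
      have h1 := hTcard ω
      have h2 : ((T ω)ᶜ : Finset (Fin K)).card = K - (T ω).card := by
        rw [Finset.card_compl, Fintype.card_fin]
      omega
    have hsumlb : (n:ℝ) * ((K:ℝ)⁻¹ ^ p * (M:ℝ)) ≤ ∑ i ∈ (T ω)ᶜ.image σ, |D i| ^ p := by
      rw [Finset.sum_image (fun a _ b _ h => hσinj h)]
      have hterm : ∀ r₀ ∈ (T ω)ᶜ, (K:ℝ)⁻¹ ^ p * (M:ℝ) ≤ |D (σ r₀)| ^ p := by
        intro r₀ hr₀
        rw [Finset.mem_compl] at hr₀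
        have h1 : ((K:ℝ)⁻¹ * Mp) ^ p ≤ |D (σ r₀)| ^ p :=
          Real.rpow_le_rpow (by positivity) (hDval r₀ hr₀) (le_of_lt hp0)
        rwa [Real.mul_rpow (by positivity) (le_of_lt hMp0'), hMpp] at h1
      calc (n:ℝ) * ((K:ℝ)⁻¹ ^ p * (M:ℝ))
          ≤ (((T ω)ᶜ.card : ℕ) : ℝ) * ((K:ℝ)⁻¹ ^ p * (M:ℝ)) := by
            have : (n:ℝ) ≤ (((T ω)ᶜ.card : ℕ) : ℝ) := by exact_mod_cast hTccard
            have hpos : (0:ℝ) ≤ (K:ℝ)⁻¹ ^ p * (M:ℝ) := by positivity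
            exact mul_le_mul_of_nonneg_right this hpos
        _ = ((T ω)ᶜ.card : ℕ) • ((K:ℝ)⁻¹ ^ p * (M:ℝ)) := by rw [nsmul_eq_mul]
        _ ≤ ∑ r₀ ∈ (T ω)ᶜ, |D (σ r₀)| ^ p := Finset.card_nsmul_le_sum _ _ _ hterm
    -- conclude
    have hKinv0 : (0:ℝ) ≤ (K:ℝ)⁻¹ := by positivity
    have hLeq : L = ((n:ℝ) * (K:ℝ)⁻¹ ^ p) ^ (1/p) := by
      rw [Real.mul_rpow hn0.le (Real.rpow_nonneg hKinv0 _), ← Real.rpow_mul hKinv0,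
        mul_one_div, div_self (ne_of_gt hp0), Real.rpow_one, hLdef]
      have hKval : (K:ℝ)⁻¹ = 2⁻¹ * (n:ℝ)⁻¹ := by
        rw [hKdef]; push_cast; rw [mul_inv]
      rw [hKval, Real.rpow_add hn0, Real.rpow_neg_one]
      ring
    calc L = ((n:ℝ) * (K:ℝ)⁻¹ ^ p) ^ (1/p) := hLeq
      _ = ((M:ℝ)⁻¹ * ((n:ℝ) * ((K:ℝ)⁻¹ ^ p * (M:ℝ)))) ^ (1/p) := by
          congr 1
          field_simp
      _ ≤ ((M:ℝ)⁻¹ * ∑ i ∈ (T ω)ᶜ.image σ, |D i| ^ p) ^ (1/p) := by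
          apply Real.rpow_le_rpow
          · exact mul_nonneg (inv_nonneg.mpr hM0.le)
              (mul_nonneg hn0.le
                (mul_nonneg (Real.rpow_nonneg hKinv0 _) hM0.le))
          · exact mul_le_mul_of_nonneg_left hsumlb (by positivity)
          · positivity
      _ ≤ lpNorm p M D := lpNorm_ge p hp0 M D _
  -- pairing bound
  have hkey : ∀ ω s, L ≤ err s ω + err (flip ω s) ω := by
    intro ω s
    have hsample : (fun l => f (flip ω s) (t ω l)) = (fun l => f s (t ω l)) := by
      funext l
      have hmem : r (t ω l) ∈ T ω := Finset.mem_image_of_mem _ (Finset.mem_univ l)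
      funext i
      simp only [f, flip, if_pos hmem]
    calc L ≤ lpNorm p M (((N : ℝ)⁻¹ • ∑ j, f s j) - ((N : ℝ)⁻¹ • ∑ j, f (flip ω s) j)) :=
          hdiff ω s
      _ ≤ lpNorm p M (((N : ℝ)⁻¹ • ∑ j, f s j) - φ ω (fun l => f s (t ω l)))
          + lpNorm p M ((φ ω (fun l => f s (t ω l))) - ((N : ℝ)⁻¹ • ∑ j, f (flip ω s) j)) :=
          lpNorm_sub_le p hp1 M _ _ _
      _ = err s ω + err (flip ω s) ω := by
          rw [lpNorm_sub_comm p M (φ ω (fun l => f s (t ω l)))]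
          simp only [err, hsample]
  -- averaging over signs
  have hω : ∀ ω, (2:ℝ)^K * L ≤ 2 * ∑ s : Fin K → Bool, err s ω := by
    intro ω
    have hbij : Function.Bijective (flip ω) := (hflipinv ω).bijective
    have hre : ∑ s : Fin K → Bool, err (flip ω s) ω = ∑ s : Fin K → Bool, err s ω :=
      hbij.sum_comp (fun s => err s ω)
    have h1 : ∑ s : Fin K → Bool, L ≤ ∑ s : Fin K → Bool, (err s ω + err (flip ω s) ω) :=
      Finset.sum_le_sum (fun s _ => hkey ω s)
    rw [Finset.sum_add_distrib, hre, Finset.sum_const] at h1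
    have hcard : (Finset.univ : Finset (Fin K → Bool)).card = 2^K := by
      simp [Finset.card_univ]
    rw [hcard] at h1
    calc (2:ℝ)^K * L = (2^K : ℕ) • L := by
          rw [nsmul_eq_mul]; push_cast; ring
      _ ≤ ∑ s : Fin K → Bool, err s ω + ∑ s : Fin K → Bool, err s ω := h1
      _ = 2 * ∑ s : Fin K → Bool, err s ω := by ring
  -- combine
  have hsum1 : ∑ s : Fin K → Bool, ∑ ω, P ω * err s ω ≤ (2:ℝ)^K * b := by
    calc ∑ s : Fin K → Bool, ∑ ω, P ω * err s ω
        ≤ ∑ s : Fin K → Bool, b := Finset.sum_le_sum (fun s _ => hberr s)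
      _ = (2^K : ℕ) • b := by rw [Finset.sum_const]; simp [Finset.card_univ]
      _ = (2:ℝ)^K * b := by rw [nsmul_eq_mul]; push_cast; ring
  have hsum2 : (2:ℝ)^K * ((1/2) * L) ≤ ∑ s : Fin K → Bool, ∑ ω, P ω * err s ω := by
    rw [Finset.sum_comm]
    have : ∀ ω, P ω * ((2:ℝ)^K * ((1/2) * L)) ≤ ∑ s : Fin K → Bool, P ω * err s ω := by
      intro ω
      rw [← Finset.mul_sum]
      refine mul_le_mul_of_nonneg_left ?_ (hP ω)
      have := hω ω
      linarith
    calc (2:ℝ)^K * ((1/2) * L) = ∑ ω, P ω * ((2:ℝ)^K * ((1/2) * L)) := by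
          rw [← Finset.sum_mul, hPsum, one_mul]
      _ ≤ ∑ ω, ∑ s : Fin K → Bool, P ω * err s ω := Finset.sum_le_sum (fun ω _ => this ω)
  have h2K0 : (0:ℝ) < (2:ℝ)^K := by positivity
  have hfin : (1/2) * L ≤ b := by
    have := le_trans hsum2 hsum1
    nlinarith
  calc (1/4 : ℝ) * (n:ℝ) ^ (-1 + 1/p) = (1/2) * L := by rw [hLdef]; ring
    _ ≤ b := hfin
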